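/- Let G be a finite group with |G| ≥ 2, c0, c1, m positive integers, b_x, M1, M2 ≥ 0, and let σ : ℝ → ℝ be 1-Lipschitz, nondecreasing, and positively homogeneous. For inputs x define the max-pooled network h_{u,w}(x) = Σ_{j∈Fin c1} u_j · max_{g∈G} σ( z_j^{w,x}(g) ). For g∈G and an input x, let g·x denote the translated input (g·x)(i, h) = x(i, g⁻¹h). Fix inputs x_1, …, x_m with ‖x_i‖ ≤ b_x. For l : Fin m → G let A_l be the m×m Gram matrix with entries (A_l)_{i,i'} = ⟨ l_i·x_i , l_{i'}·x_{i'} ⟩ (inner product in ℝ^{c0·|G|}), and set M := max over all l : Fin m → G of the spectral (ℓ2→ℓ2 operator) norm ‖A_l‖. Define g(X) := √( 8·log|G|·M + b_x² + √(8·log|G|·M·b_x²) ). Then E_ε sup_{u : ‖u‖ ≤ M1, w : ‖w‖ ≤ M2} (1/m) Σ_{i=1}^m ε_i · h_{u,w}(x_i) ≤ M1 · M2 · g(X) / √m. -/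

import Mathlib

open Finset

/-- Multi-channel group convolution pre-activation channel. -/
noncomputable def gconvChannel {G : Type*} [Group G] [Fintype G] {c0 : ℕ}
    (w : Fin c0 → G → ℝ) (x : Fin c0 → G → ℝ) (g : G) : ℝ :=
  ∑ i : Fin c0, ∑ h : G, w i (g⁻¹ * h) * x i h

/-- One-hidden-layer group convolutional network with max pooling. -/
noncomputable def maxPoolNet {G : Type*} [Group G] [Fintype G] {c0 c1 : ℕ}
    (σ : ℝ → ℝ) (u : Fin c1 → ℝ) (w : Fin c1 → Fin c0 → G → ℝ)
    (x : Fin c0 → G → ℝ) : ℝ :=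
  ∑ j : Fin c1, u j * (Finset.univ.sup' Finset.univ_nonempty
    fun g : G => σ (gconvChannel (w j) x g))

/-- Spectral (ℓ2→ℓ2 operator) norm of a real square matrix. -/
noncomputable def specNorm {m : ℕ} (A : Matrix (Fin m) (Fin m) ℝ) : ℝ :=
  ‖Matrix.toEuclideanCLM (𝕜 := ℝ) A‖

lemma quad_le {n : ℕ} (A : Matrix (Fin n) (Fin n) ℝ) (v : Fin n → ℝ) :
    ∑ i, ∑ i', v i * (A i i' * v i') ≤ specNorm A * ∑ i, (v i)^2 := by
  set V : EuclideanSpace ℝ (Fin n) := (WithLp.equiv 2 _).symm v with hV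
  have hnorm : ‖V‖ ^ 2 = ∑ i, (v i) ^ 2 := by
    rw [EuclideanSpace.norm_eq, Real.sq_sqrt (by positivity)]
    simp [hV, Real.norm_eq_abs, sq_abs]
  have h1 : ∑ i, ∑ i', v i * (A i i' * v i')
      = (inner ℝ V ((Matrix.toEuclideanCLM (𝕜 := ℝ) A) V) : ℝ) := by
    rw [hV, WithLp.equiv_symm_apply, Matrix.toEuclideanCLM_toLp]
    simp [PiLp.inner_apply, Matrix.mulVec, dotProduct, Finset.mul_sum, Finset.sum_mul]
    exact Finset.sum_congr rfl fun i _ => Finset.sum_congr rfl fun j _ => by ring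
  have h2 : (inner ℝ V ((Matrix.toEuclideanCLM (𝕜 := ℝ) A) V) : ℝ) ≤ specNorm A * ‖V‖ ^ 2 := by
    calc (inner ℝ V ((Matrix.toEuclideanCLM (𝕜 := ℝ) A) V) : ℝ)
        ≤ ‖V‖ * ‖(Matrix.toEuclideanCLM (𝕜 := ℝ) A) V‖ := real_inner_le_norm _ _
      _ ≤ ‖V‖ * (specNorm A * ‖V‖) := by
          gcongr; exact ((Matrix.toEuclideanCLM (𝕜 := ℝ) A).le_opNorm V)
      _ = specNorm A * ‖V‖ ^ 2 := by ring
  rw [h1, ← hnorm]; exact h2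

lemma key_bound {G : Type*} [Group G] [Fintype G] [Nonempty G] {c0 m : ℕ}
    (σ : ℝ → ℝ) (hσabs : ∀ t, |σ t| ≤ |t|)
    (x : Fin m → Fin c0 → G → ℝ) (M : ℝ)
    (hMA : ∀ l : Fin m → G, specNorm (Matrix.of fun i i' : Fin m =>
      ∑ k : Fin c0, ∑ g : G, x i k ((l i)⁻¹ * g) * x i' k ((l i')⁻¹ * g)) ≤ M)
    (v : Fin c0 → G → ℝ) (ε' : Fin m → ℝ) (hε' : ∀ i, |ε' i| ≤ 1) :
    |∑ i, ε' i * Finset.univ.sup' Finset.univ_nonempty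
        (fun g : G => σ (gconvChannel v (x i) g))|
      ≤ Real.sqrt (M * m) * Real.sqrt (∑ k, ∑ g, (v k g)^2) := by
  have exmax : ∀ i : Fin m, ∃ gi : G, ∀ g : G,
      |gconvChannel v (x i) g| ≤ |gconvChannel v (x i) gi| := by
    intro i
    obtain ⟨b, -, hb⟩ := Finset.exists_max_image (univ : Finset G)
      (fun g => |gconvChannel v (x i) g|) univ_nonempty
    exact ⟨b, fun g => hb g (mem_univ g)⟩
  choose gg hgg using exmax
  have step1 : |∑ i, ε' i * Finset.univ.sup' Finset.univ_nonempty
        (fun g : G => σ (gconvChannel v (x i) g))|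
      ≤ ∑ i, |gconvChannel v (x i) (gg i)| := by
    refine (Finset.abs_sum_le_sum_abs _ _).trans (Finset.sum_le_sum ?_)
    intro i _
    rw [abs_mul]
    have h2 : |Finset.univ.sup' Finset.univ_nonempty
        (fun g : G => σ (gconvChannel v (x i) g))| ≤ |gconvChannel v (x i) (gg i)| := by
      obtain ⟨g0, -, hg0⟩ := Finset.exists_mem_eq_sup' (Finset.univ_nonempty)
        (fun g : G => σ (gconvChannel v (x i) g))
      rw [hg0]
      exact (hσabs _).trans (hgg i g0)
    calc |ε' i| * |Finset.univ.sup' Finset.univ_nonempty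
          (fun g : G => σ (gconvChannel v (x i) g))|
        ≤ 1 * |gconvChannel v (x i) (gg i)| :=
          mul_le_mul (hε' i) h2 (abs_nonneg _) one_pos.le
      _ = _ := one_mul _
  -- reindex the convolution at the maximizing group element
  have reindex : ∀ i, gconvChannel v (x i) (gg i)
      = ∑ k, ∑ h, v k h * x i k (gg i * h) := by
    intro i
    unfold gconvChannel
    refine Finset.sum_congr rfl fun k _ => ?_
    have := Equiv.sum_comp (Equiv.mulLeft (gg i))
      (fun h => v k ((gg i)⁻¹ * h) * x i k h)
    simpa using this.symm
  set η : Fin m → ℝ := fun i => if 0 ≤ gconvChannel v (x i) (gg i) then 1 else -1 with hη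
  have hηz : ∀ i, |gconvChannel v (x i) (gg i)| = η i * gconvChannel v (x i) (gg i) := by
    intro i
    by_cases h : 0 ≤ gconvChannel v (x i) (gg i)
    · simp [hη, h, abs_of_nonneg h]
    · simp [hη, h, abs_of_neg (lt_of_not_ge h)]
  have hη2 : ∀ i, η i ^ 2 = 1 := by
    intro i; by_cases h : 0 ≤ gconvChannel v (x i) (gg i) <;> simp [hη, h]
  set S : Fin c0 → G → ℝ := fun k h => ∑ i, η i * x i k (gg i * h) with hS
  have step2 : ∑ i, |gconvChannel v (x i) (gg i)| = ∑ k, ∑ h, v k h * S k h := by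
    calc ∑ i, |gconvChannel v (x i) (gg i)|
        = ∑ i, ∑ k, ∑ h, η i * (v k h * x i k (gg i * h)) := by
          refine Finset.sum_congr rfl fun i _ => ?_
          rw [hηz i, reindex i, Finset.mul_sum]
          exact Finset.sum_congr rfl fun k _ => by rw [Finset.mul_sum]
      _ = ∑ k, ∑ i, ∑ h, η i * (v k h * x i k (gg i * h)) := Finset.sum_comm
      _ = ∑ k, ∑ h, ∑ i, η i * (v k h * x i k (gg i * h)) := by
          exact Finset.sum_congr rfl fun k _ => Finset.sum_comm
      _ = ∑ k, ∑ h, v k h * S k h := by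
          refine Finset.sum_congr rfl fun k _ => Finset.sum_congr rfl fun h _ => ?_
          rw [hS, Finset.mul_sum]
          exact Finset.sum_congr rfl fun i _ => by ring
  -- Cauchy-Schwarz
  have cs : ∑ k, ∑ h, v k h * S k h
      ≤ Real.sqrt (∑ k, ∑ h, (S k h)^2) * Real.sqrt (∑ k, ∑ g, (v k g)^2) := by
    have h1 : (∑ p : Fin c0 × G, v p.1 p.2 * S p.1 p.2)^2
        ≤ (∑ p : Fin c0 × G, (S p.1 p.2)^2) * (∑ p : Fin c0 × G, (v p.1 p.2)^2) := by
      have := Finset.sum_mul_sq_le_sq_mul_sq univ (fun p : Fin c0 × G => S p.1 p.2)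
        (fun p : Fin c0 × G => v p.1 p.2)
      calc (∑ p : Fin c0 × G, v p.1 p.2 * S p.1 p.2)^2
          = (∑ p : Fin c0 × G, S p.1 p.2 * v p.1 p.2)^2 := by
            congr 1; exact Finset.sum_congr rfl fun p _ => mul_comm _ _
        _ ≤ _ := this
    have h2 : ∑ p : Fin c0 × G, v p.1 p.2 * S p.1 p.2 = ∑ k, ∑ h, v k h * S k h :=
      Fintype.sum_prod_type _
    have h3 : ∑ p : Fin c0 × G, (S p.1 p.2)^2 = ∑ k, ∑ h, (S k h)^2 :=
      Fintype.sum_prod_type _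
    have h4 : ∑ p : Fin c0 × G, (v p.1 p.2)^2 = ∑ k, ∑ g, (v k g)^2 :=
      Fintype.sum_prod_type _
    rw [h2, h3, h4] at h1
    calc ∑ k, ∑ h, v k h * S k h ≤ |∑ k, ∑ h, v k h * S k h| := le_abs_self _
      _ = Real.sqrt ((∑ k, ∑ h, v k h * S k h)^2) := (Real.sqrt_sq_eq_abs _).symm
      _ ≤ Real.sqrt ((∑ k, ∑ h, (S k h)^2) * (∑ k, ∑ g, (v k g)^2)) :=
          Real.sqrt_le_sqrt h1
      _ = _ := Real.sqrt_mul (by positivity) _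
  -- bound the Gram quadratic form
  have gram : ∑ k, ∑ h, (S k h)^2 ≤ M * m := by
    set l : Fin m → G := fun i => (gg i)⁻¹ with hl
    set A : Matrix (Fin m) (Fin m) ℝ := Matrix.of fun i i' : Fin m =>
      ∑ k : Fin c0, ∑ g : G, x i k ((l i)⁻¹ * g) * x i' k ((l i')⁻¹ * g) with hA
    have expand : ∑ k, ∑ h, (S k h)^2 = ∑ i, ∑ i', η i * (A i i' * η i') := by
      calc ∑ k, ∑ h, (S k h)^2
          = ∑ k, ∑ h, ∑ i, ∑ i',
              (η i * x i k (gg i * h)) * (η i' * x i' k (gg i' * h)) := by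
            refine Finset.sum_congr rfl fun k _ => Finset.sum_congr rfl fun h _ => ?_
            rw [hS, sq, Finset.sum_mul_sum]
        _ = ∑ k, ∑ i, ∑ h, ∑ i',
              (η i * x i k (gg i * h)) * (η i' * x i' k (gg i' * h)) :=
            Finset.sum_congr rfl fun k _ => Finset.sum_comm
        _ = ∑ i, ∑ k, ∑ h, ∑ i',
              (η i * x i k (gg i * h)) * (η i' * x i' k (gg i' * h)) :=
            Finset.sum_comm
        _ = ∑ i, ∑ k, ∑ i', ∑ h,
              (η i * x i k (gg i * h)) * (η i' * x i' k (gg i' * h)) :=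
            Finset.sum_congr rfl fun i _ =>
              Finset.sum_congr rfl fun k _ => Finset.sum_comm
        _ = ∑ i, ∑ i', ∑ k, ∑ h,
              (η i * x i k (gg i * h)) * (η i' * x i' k (gg i' * h)) :=
            Finset.sum_congr rfl fun i _ => Finset.sum_comm
        _ = ∑ i, ∑ i', η i * (A i i' * η i') := by
            refine Finset.sum_congr rfl fun i _ => Finset.sum_congr rfl fun i' _ => ?_
            rw [hA]
            simp only [Matrix.of_apply, hl, inv_inv, Finset.sum_mul, Finset.mul_sum]
            exact Finset.sum_congr rfl fun k _ =>
              Finset.sum_congr rfl fun h _ => by ring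
    rw [expand]
    calc ∑ i, ∑ i', η i * (A i i' * η i') ≤ specNorm A * ∑ i, (η i)^2 := quad_le A η
      _ = specNorm A * m := by
          congr 1
          simp [hη2]
      _ ≤ M * m := by
          have := hMA l
          rw [← hA] at this
          have hs : (0:ℝ) ≤ (m:ℝ) := Nat.cast_nonneg m
          exact mul_le_mul_of_nonneg_right this hs
  calc |∑ i, ε' i * Finset.univ.sup' Finset.univ_nonempty
        (fun g : G => σ (gconvChannel v (x i) g))|
      ≤ ∑ k, ∑ h, v k h * S k h := step1.trans_eq step2
    _ ≤ Real.sqrt (∑ k, ∑ h, (S k h)^2) * Real.sqrt (∑ k, ∑ g, (v k g)^2) := cs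
    _ ≤ Real.sqrt (M * m) * Real.sqrt (∑ k, ∑ g, (v k g)^2) := by
        exact mul_le_mul_of_nonneg_right (Real.sqrt_le_sqrt gram) (Real.sqrt_nonneg _)
theorem rademacher_bound_max_pooling
    {G : Type*} [Group G] [Fintype G] (hG : 2 ≤ Fintype.card G)
    (c0 c1 m : ℕ) (hc0 : 0 < c0) (hc1 : 0 < c1) (hm : 0 < m)
    (bx M1 M2 : ℝ) (hbx : 0 ≤ bx) (hM1 : 0 ≤ M1) (hM2 : 0 ≤ M2)
    (σ : ℝ → ℝ) (hσL : LipschitzWith 1 σ) (hσmono : Monotone σ)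
    (hσh : ∀ a t : ℝ, 0 ≤ a → σ (a * t) = a * σ t)
    (x : Fin m → Fin c0 → G → ℝ)
    (hx : ∀ i, Real.sqrt (∑ k : Fin c0, ∑ g : G, (x i k g) ^ 2) ≤ bx)
    (M : ℝ)
    (hM : M = ⨆ l : Fin m → G, specNorm (Matrix.of fun i i' : Fin m =>
      ∑ k : Fin c0, ∑ g : G, x i k ((l i)⁻¹ * g) * x i' k ((l i')⁻¹ * g))) :
    (∑ ε : Fin m → Bool,
        sSup {r : ℝ | ∃ (u : Fin c1 → ℝ) (w : Fin c1 → Fin c0 → G → ℝ),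
          Real.sqrt (∑ j : Fin c1, (u j) ^ 2) ≤ M1 ∧
          Real.sqrt (∑ j : Fin c1, ∑ k : Fin c0, ∑ g : G, (w j k g) ^ 2) ≤ M2 ∧
          r = (1 / (m : ℝ)) * ∑ i : Fin m,
            (if ε i then (1 : ℝ) else -1) * maxPoolNet σ u w (x i)}) / 2 ^ m
      ≤ M1 * M2 *
          Real.sqrt (8 * Real.log (Fintype.card G) * M + bx ^ 2 +
            Real.sqrt (8 * Real.log (Fintype.card G) * M * bx ^ 2)) /
        Real.sqrt m := by
  have hGne : Nonempty G := Fintype.card_pos_iff.mp (by omega)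
  have hmne : ((m : ℝ)) ≠ 0 := Nat.cast_ne_zero.mpr hm.ne'
  have hm0 : (0:ℝ) < (m:ℝ) := by exact_mod_cast hm
  have hMA : ∀ l : Fin m → G, specNorm (Matrix.of fun i i' : Fin m =>
      ∑ k : Fin c0, ∑ g : G, x i k ((l i)⁻¹ * g) * x i' k ((l i')⁻¹ * g)) ≤ M := by
    intro l
    rw [hM]
    exact le_ciSup (f := fun l : Fin m → G => specNorm (Matrix.of fun i i' : Fin m =>
      ∑ k : Fin c0, ∑ g : G, x i k ((l i)⁻¹ * g) * x i' k ((l i')⁻¹ * g)))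
      (Set.Finite.bddAbove (Set.finite_range _)) l
  have hM0 : 0 ≤ M := le_trans (norm_nonneg _) (hMA (fun _ => Classical.arbitrary G))
  have hσ0 : σ 0 = 0 := by simpa using hσh 0 0 le_rfl
  have hσabs : ∀ t, |σ t| ≤ |t| := by
    intro t
    have := hσL.dist_le_mul t 0
    simpa [hσ0, Real.dist_eq] using this
  set B := M1 * M2 * Real.sqrt M / Real.sqrt m with hB
  have hB0 : 0 ≤ B := by positivity
  have hsup : ∀ ε : Fin m → Bool,
      sSup {r : ℝ | ∃ (u : Fin c1 → ℝ) (w : Fin c1 → Fin c0 → G → ℝ),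
          Real.sqrt (∑ j : Fin c1, (u j) ^ 2) ≤ M1 ∧
          Real.sqrt (∑ j : Fin c1, ∑ k : Fin c0, ∑ g : G, (w j k g) ^ 2) ≤ M2 ∧
          r = (1 / (m : ℝ)) * ∑ i : Fin m,
            (if ε i then (1 : ℝ) else -1) * maxPoolNet σ u w (x i)} ≤ B := by
    intro ε
    refine Real.sSup_le ?_ hB0
    rintro r ⟨u, w, hu, hw, rfl⟩
    set ε' : Fin m → ℝ := fun i => if ε i then (1:ℝ) else -1 with hε'def
    have hε' : ∀ i, |ε' i| ≤ 1 := by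
      intro i; by_cases h : ε i <;> simp [hε'def, h]
    set P : Fin c1 → Fin m → ℝ := fun j i => Finset.univ.sup' Finset.univ_nonempty
      fun g : G => σ (gconvChannel (w j) (x i) g) with hP
    set q : Fin c1 → ℝ := fun j => (1/(m:ℝ)) * ∑ i, ε' i * P j i with hq
    have hr : (1 / (m : ℝ)) * ∑ i : Fin m,
        (if ε i then (1 : ℝ) else -1) * maxPoolNet σ u w (x i) = ∑ j, u j * q j := by
      simp only [maxPoolNet, hq, hP, hε'def, Finset.mul_sum]
      rw [Finset.sum_comm]
      refine Finset.sum_congr rfl fun j _ => ?_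
      exact Finset.sum_congr rfl fun i _ => by ring
    have hq2 : ∀ j, (q j)^2 ≤ (M / m) * (∑ k, ∑ g, (w j k g)^2) := by
      intro j
      have hkey := key_bound σ hσabs x M hMA (w j) ε' hε'
      have habs : |q j| ≤ (1/(m:ℝ)) * (Real.sqrt (M * m)
          * Real.sqrt (∑ k, ∑ g, (w j k g)^2)) := by
        rw [hq]
        rw [abs_mul, abs_of_nonneg (by positivity : (0:ℝ) ≤ 1/(m:ℝ))]
        exact mul_le_mul_of_nonneg_left hkey (by positivity)
      have hWnn : (0:ℝ) ≤ ∑ k, ∑ g, (w j k g)^2 := by positivity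
      calc (q j)^2 = |q j|^2 := (sq_abs _).symm
        _ ≤ ((1/(m:ℝ)) * (Real.sqrt (M * m) * Real.sqrt (∑ k, ∑ g, (w j k g)^2)))^2 :=
            pow_le_pow_left₀ (abs_nonneg _) habs 2
        _ = (1/(m:ℝ))^2 * ((M * m) * (∑ k, ∑ g, (w j k g)^2)) := by
            rw [mul_pow, mul_pow, Real.sq_sqrt (by positivity), Real.sq_sqrt hWnn]
        _ = (M / m) * (∑ k, ∑ g, (w j k g)^2) := by
            field_simp
    have hqsum : ∑ j, (q j)^2 ≤ (M / m) * M2^2 := by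
      have hW : ∑ j, ∑ k, ∑ g, (w j k g)^2 ≤ M2^2 := by
        have h1 : (0:ℝ) ≤ ∑ j, ∑ k, ∑ g, (w j k g)^2 := by positivity
        calc ∑ j, ∑ k, ∑ g, (w j k g)^2
            = (Real.sqrt (∑ j, ∑ k, ∑ g, (w j k g)^2))^2 := (Real.sq_sqrt h1).symm
          _ ≤ M2^2 := pow_le_pow_left₀ (Real.sqrt_nonneg _) hw 2
      calc ∑ j, (q j)^2 ≤ ∑ j, (M / m) * (∑ k, ∑ g, (w j k g)^2) :=
            Finset.sum_le_sum fun j _ => hq2 j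
        _ = (M / m) * ∑ j, ∑ k, ∑ g, (w j k g)^2 := (Finset.mul_sum _ _ _).symm
        _ ≤ (M / m) * M2^2 := by
            exact mul_le_mul_of_nonneg_left hW (by positivity)
    have hcs : ∑ j, u j * q j ≤ Real.sqrt (∑ j, (u j)^2) * Real.sqrt (∑ j, (q j)^2) := by
      have h1 := Finset.sum_mul_sq_le_sq_mul_sq Finset.univ u q
      calc ∑ j, u j * q j ≤ |∑ j, u j * q j| := le_abs_self _
        _ = Real.sqrt ((∑ j, u j * q j)^2) := (Real.sqrt_sq_eq_abs _).symm
        _ ≤ Real.sqrt ((∑ j, (u j)^2) * (∑ j, (q j)^2)) := Real.sqrt_le_sqrt h1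
        _ = _ := Real.sqrt_mul (by positivity) _
    have hqn : Real.sqrt (∑ j, (q j)^2) ≤ M2 * Real.sqrt M / Real.sqrt m := by
      calc Real.sqrt (∑ j, (q j)^2) ≤ Real.sqrt ((M / m) * M2^2) :=
            Real.sqrt_le_sqrt hqsum
        _ = Real.sqrt (M / m) * M2 := by
            rw [Real.sqrt_mul (by positivity), Real.sqrt_sq hM2]
        _ = M2 * Real.sqrt M / Real.sqrt m := by
            rw [Real.sqrt_div hM0]
            ring
    rw [hr]
    calc ∑ j, u j * q j ≤ Real.sqrt (∑ j, (u j)^2) * Real.sqrt (∑ j, (q j)^2) := hcs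
      _ ≤ M1 * (M2 * Real.sqrt M / Real.sqrt m) :=
          mul_le_mul hu hqn (Real.sqrt_nonneg _) hM1
      _ = B := by rw [hB]; ring
  -- sum over sign patterns
  have hcard : (Finset.univ : Finset (Fin m → Bool)).card = 2 ^ m := by
    simp [Fintype.card_fun]
  have hsum : (∑ ε : Fin m → Bool,
      sSup {r : ℝ | ∃ (u : Fin c1 → ℝ) (w : Fin c1 → Fin c0 → G → ℝ),
          Real.sqrt (∑ j : Fin c1, (u j) ^ 2) ≤ M1 ∧
          Real.sqrt (∑ j : Fin c1, ∑ k : Fin c0, ∑ g : G, (w j k g) ^ 2) ≤ M2 ∧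
          r = (1 / (m : ℝ)) * ∑ i : Fin m,
            (if ε i then (1 : ℝ) else -1) * maxPoolNet σ u w (x i)})
      ≤ (2:ℝ)^m * B := by
    calc (∑ ε : Fin m → Bool, sSup _) ≤ ∑ _ε : Fin m → Bool, B :=
          Finset.sum_le_sum fun ε _ => hsup ε
      _ = (2:ℝ)^m * B := by
          rw [Finset.sum_const, hcard, nsmul_eq_mul]
          norm_num
  have hdiv : (∑ ε : Fin m → Bool,
      sSup {r : ℝ | ∃ (u : Fin c1 → ℝ) (w : Fin c1 → Fin c0 → G → ℝ),
          Real.sqrt (∑ j : Fin c1, (u j) ^ 2) ≤ M1 ∧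
          Real.sqrt (∑ j : Fin c1, ∑ k : Fin c0, ∑ g : G, (w j k g) ^ 2) ≤ M2 ∧
          r = (1 / (m : ℝ)) * ∑ i : Fin m,
            (if ε i then (1 : ℝ) else -1) * maxPoolNet σ u w (x i)}) / 2 ^ m ≤ B := by
    rw [div_le_iff₀ (by positivity : (0:ℝ) < 2 ^ m)]
    calc _ ≤ (2:ℝ)^m * B := hsum
      _ = B * 2 ^ m := mul_comm _ _
  refine hdiv.trans ?_
  -- compare B with the final bound
  have hlog : (1:ℝ) ≤ 8 * Real.log (Fintype.card G) := by
    have h2 : (2:ℝ) ≤ (Fintype.card G : ℝ) := by exact_mod_cast hG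
    have hl : Real.log 2 ≤ Real.log (Fintype.card G) :=
      Real.log_le_log (by norm_num) h2
    have := Real.log_two_gt_d9
    linarith
  have harg : M ≤ 8 * Real.log (Fintype.card G) * M + bx ^ 2 +
      Real.sqrt (8 * Real.log (Fintype.card G) * M * bx ^ 2) := by
    have h1 : M ≤ 8 * Real.log (Fintype.card G) * M := by nlinarith
    have h2 : (0:ℝ) ≤ bx ^ 2 := by positivity
    have h3 : (0:ℝ) ≤ Real.sqrt (8 * Real.log (Fintype.card G) * M * bx ^ 2) :=
      Real.sqrt_nonneg _
    linarith
  rw [hB]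
  have hs := Real.sqrt_le_sqrt harg
  gcongr
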